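/- Let A ∈ 𝔅(n) be a Bott matrix with A_ℓ = A_m for distinct ℓ, m, and let B = Φ^{ℓ,m}(A). Let a_1,…,a_n and b_1,…,b_n be the involutions of T^n associated with A and B respectively, and let f̃ : T^n → T^n be the map (z_1,…,z_n) ↦ (z_1,…,z_{ℓ−1}, z_ℓ z_m, z_{ℓ+1},…,z_n). Then for every z ∈ T^n, f̃(b_i(z)) = a_i(f̃(z)) for all i ≠ m, and f̃(b_m(z)) = (a_ℓ ∘ a_m)(f̃(z)). -/

import Mathlib

open Matrix

/-- A Bott matrix: conjugate by a permutation matrix to a strictly upper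
triangular binary matrix. -/
def IsBott {n : ℕ} (A : Matrix (Fin n) (Fin n) (ZMod 2)) : Prop :=
  ∃ (σ : Equiv.Perm (Fin n)) (B : Matrix (Fin n) (Fin n) (ZMod 2)),
    (∀ i j : Fin n, j ≤ i → B i j = 0) ∧
    A = σ.permMatrix (ZMod 2) * B * (σ⁻¹).permMatrix (ZMod 2)

/-- (Op3) `Φ^{ℓ,m}(A)`: add the `ℓ`-th row to the `m`-th row. -/
def Phi3 {n : ℕ} (l m : Fin n) (A : Matrix (Fin n) (Fin n) (ZMod 2)) :
    Matrix (Fin n) (Fin n) (ZMod 2) :=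
  fun i j => if i = m then A l j + A m j else A i j

/-- `z(a)`: `z` if `a = 0` and the complex conjugate `z̄` if `a = 1`. -/
noncomputable def conjPow (a : ZMod 2) (z : ℂ) : ℂ :=
  if a = 0 then z else (starRingEnd ℂ) z

/-- The involution `a_i` of `T^n ⊆ ℂ^n` associated with a binary matrix `A`. -/
noncomputable def aMap {n : ℕ} (A : Matrix (Fin n) (Fin n) (ZMod 2)) (i : Fin n)
    (z : Fin n → ℂ) : Fin n → ℂ :=
  fun j => if j = i then -z i else conjPow (A i j) (z j)

/-- The affine automorphism `f̃ = f̃^{ℓ,m}` of `T^n`: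
`(z_1,…,z_n) ↦ (z_1,…,z_{ℓ−1}, z_ℓ z_m, z_{ℓ+1},…,z_n)`. -/
noncomputable def ftildeLM {n : ℕ} (l m : Fin n) (z : Fin n → ℂ) : Fin n → ℂ :=
  fun j => if j = l then z l * z m else z j

lemma conjPow_zero (z : ℂ) : conjPow 0 z = z := by simp [conjPow]

lemma conjPow_add (a b : ZMod 2) (z : ℂ) :
    conjPow (a + b) z = conjPow a (conjPow b z) := by
  have h2 : (1 + 1 : ZMod 2) = 0 := rfl
  have h01 : ∀ x : ZMod 2, x = 0 ∨ x = 1 := by decide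
  rcases h01 a with rfl | rfl <;> rcases h01 b with rfl | rfl <;> simp [conjPow, h2]

lemma conjPow_mul (a : ZMod 2) (x y : ℂ) :
    conjPow a (x * y) = conjPow a x * conjPow a y := by
  unfold conjPow; split <;> simp

lemma IsBott.diag_zero {n : ℕ} {A : Matrix (Fin n) (Fin n) (ZMod 2)}
    (hA : IsBott A) (i : Fin n) : A i i = 0 := by
  obtain ⟨σ, B, hB, rfl⟩ := hA
  rw [Equiv.Perm.permMatrix, Equiv.Perm.permMatrix,
    PEquiv.toMatrix_toPEquiv_mul]
  rw [show (B.submatrix σ id) * (σ⁻¹ : Equiv.Perm (Fin n)).toPEquiv.toMatrix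
      = (B.submatrix σ id).submatrix id (σ⁻¹ : Equiv.Perm (Fin n)).symm from
    PEquiv.mul_toMatrix_toPEquiv _ _]
  simp [Matrix.submatrix_apply, Equiv.Perm.inv_def, hB (σ i) (σ i) le_rfl]

/-- Equivariance of `f̃^{ℓ,m}` for the operation (Op3): with `B = Φ^{ℓ,m}(A)`
(for `ℓ ≠ m` and equal columns `A_ℓ = A_m`) and the involutions `b_i` of `B`,
one has `f̃(b_i(z)) = a_i(f̃(z))` for `i ≠ m` and
`f̃(b_m(z)) = (a_ℓ ∘ a_m)(f̃(z))`, for all `z ∈ T^n`. -/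
theorem ftildeLM_equivariant {n : ℕ} (A : Matrix (Fin n) (Fin n) (ZMod 2))
    (hA : IsBott A) (l m : Fin n) (hlm : l ≠ m) (hcol : ∀ i, A i l = A i m) :
    ∀ z : Fin n → ℂ, (∀ j, ‖z j‖ = 1) →
      (∀ i : Fin n, i ≠ m →
        ftildeLM l m (aMap (Phi3 l m A) i z) = aMap A i (ftildeLM l m z)) ∧
      ftildeLM l m (aMap (Phi3 l m A) m z) =
        aMap A l (aMap A m (ftildeLM l m z)) := by
  intro z _
  have hAll : A l l = 0 := hA.diag_zero l
  have hAmm : A m m = 0 := hA.diag_zero m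
  have hAlm : A l m = 0 := by rw [← hcol l]; exact hAll
  have hAml : A m l = 0 := by rw [hcol m]; exact hAmm
  constructor
  · intro i him
    funext j
    rcases eq_or_ne j l with rfl | hjl
    · rcases eq_or_ne i j with rfl | hil
      ·
        simp [ftildeLM, aMap, Phi3, him, hlm.symm, hAlm, conjPow_zero,
          neg_mul]
      · simp [ftildeLM, aMap, Phi3, him, hil, Ne.symm him, Ne.symm hil,
          conjPow_mul, hcol i]
    · rcases eq_or_ne j i with rfl | hji
      · simp [ftildeLM, aMap, hjl]
      · simp [ftildeLM, aMap, Phi3, hjl, hji, him]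
  · funext j
    rcases eq_or_ne j l with rfl | hjl
    · simp [ftildeLM, aMap, Phi3, hlm, hlm.symm, hAml, hAll, conjPow_zero,
        mul_comm]
    · rcases eq_or_ne j m with rfl | hjm
      · simp [ftildeLM, aMap, hjl, hAlm, conjPow_zero, hlm.symm]
      · simp [ftildeLM, aMap, Phi3, hjl, hjm, conjPow_add]
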